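/- Let S be a ring with J(S) ≠ S, let R = ⊕_{i∈ℤ} S_i where each S_i = S, and let σ : R → R be the shift automorphism σ(Σ_{i∈ℤ} a_i) = Σ_{i∈ℤ} a_{i−1}. Then J(R[x;σ]) ≠ J(R)[x;σ]; indeed there exists r ∈ R with r ∉ J(R) but r·x ∈ J(R[x;σ]). -/

import Mathlib

open Pointwise

/-- The (possibly non-unital) ring of finitely supported functions `ℤ → S`, i.e. the direct
sum `⊕_{i ∈ ℤ} S_i` with `S_i = S`, as a non-unital subring of the product `ℤ → S`. -/
def finSupport (S : Type*) [NonUnitalRing S] : NonUnitalSubring (ℤ → S) where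
  carrier := {f | (Function.support f).Finite}
  add_mem' := fun hf hg => (Set.Finite.union hf hg).subset (Function.support_add _ _)
  zero_mem' := by simp [Function.support_zero]
  neg_mem' := fun hf => by simpa [Function.support_neg] using hf
  mul_mem' := fun hf _ => hf.subset (Function.support_mul_subset_left _ _)

/-- `T` is (a copy of) the skew polynomial ring of automorphism type `R[x;σ]` over the
(possibly non-unital) ring `R`: `mono i a` is the monomial `a·xⁱ`, every element of `T` is
uniquely a polynomial `Σᵢ mono i aᵢ`, and `(a·xⁱ)(b·xʲ) = (a·σⁱ(b))·x^{i+j}`. -/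
structure IsSkewPolyRing {R T : Type*} [NonUnitalRing R] [NonUnitalRing T]
    (σ : R → R) (mono : ℕ → R → T) : Prop where
  σ_add : ∀ a b : R, σ (a + b) = σ a + σ b
  σ_mul : ∀ a b : R, σ (a * b) = σ a * σ b
  σ_bij : Function.Bijective σ
  mono_add : ∀ (i : ℕ) (a b : R), mono i (a + b) = mono i a + mono i b
  mono_mul : ∀ (i j : ℕ) (a b : R), mono i a * mono j b = mono (i + j) (a * σ^[i] b)
  repr : ∀ t : T, ∃ c : ℕ →₀ R, t = c.sum fun i a => mono i a
  uniq : ∀ c : ℕ →₀ R, (c.sum fun i a => mono i a) = 0 → c = 0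

/-- The Jacobson radical of a possibly non-unital ring `A`: the union of all quasi-regular
two-sided ideals of `A`. -/
def nuJacobson (A : Type*) [NonUnitalRing A] : Set A :=
  ⋃₀ {I : Set A | 0 ∈ I ∧ (∀ x ∈ I, ∀ y ∈ I, x + y ∈ I) ∧ (∀ x ∈ I, -x ∈ I) ∧
      (∀ x ∈ I, ∀ a : A, a * x ∈ I ∧ x * a ∈ I) ∧
      ∀ x ∈ I, ∃ y : A, x + y + x * y = 0 ∧ x + y + y * x = 0}

/-- `mulNPow A k` is the set of all products of `k + 1` elements of `A` (pointwise set
multiplication). -/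
def mulNPow {T : Type*} [Mul T] (A : Set T) : ℕ → Set T
  | 0 => A
  | k + 1 => A * mulNPow A k

section Aux

variable {R T : Type*} [NonUnitalRing R] [NonUnitalRing T]
  {σ : R → R} {mono : ℕ → R → T}

theorem IsSkewPolyRing.mono_zero (hT : IsSkewPolyRing σ mono) (i : ℕ) : mono i 0 = 0 := by
  have h := hT.mono_add i 0 0
  rw [add_zero] at h
  exact (left_eq_add.mp h)

theorem IsSkewPolyRing.mono_neg (hT : IsSkewPolyRing σ mono) (i : ℕ) (a : R) :
    mono i (-a) = -(mono i a) := by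
  have h := hT.mono_add i a (-a)
  rw [add_neg_cancel, hT.mono_zero] at h
  exact eq_neg_of_add_eq_zero_left (by rw [add_comm]; exact h.symm)

theorem IsSkewPolyRing.mono_sub (hT : IsSkewPolyRing σ mono) (i : ℕ) (a b : R) :
    mono i (a - b) = mono i a - mono i b := by
  rw [sub_eq_add_neg, hT.mono_add, hT.mono_neg, sub_eq_add_neg]

theorem IsSkewPolyRing.sum_injective (hT : IsSkewPolyRing σ mono) {c c' : ℕ →₀ R}
    (h : (c.sum fun i a => mono i a) = c'.sum fun i a => mono i a) : c = c' := by
  have h0 : ((c - c').sum fun i a => mono i a) = 0 := by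
    rw [Finsupp.sum_sub_index (fun i a b => hT.mono_sub i a b), h, sub_self]
  exact sub_eq_zero.mp (hT.uniq _ h0)

end Aux

/-- **Example (Bedi–Ram).** Let `S` be a ring with `J(S) ≠ S`, let `R = ⊕_{i∈ℤ} S_i` with
`S_i = S`, and let `σ` be the shift automorphism. Then `J(R[x;σ]) ≠ J(R)[x;σ]`; indeed there
is `r ∈ R` with `r ∉ J(R)` but `r·x ∈ J(R[x;σ])`. -/
theorem shift_skewPolyRing_jacobson_ne {S T : Type*} [NonUnitalRing S] [NonUnitalRing T]
    (hS : nuJacobson S ≠ Set.univ)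
    (σ : finSupport S → finSupport S)
    (hσ : ∀ (f : finSupport S) (i : ℤ), (σ f : ℤ → S) i = (f : ℤ → S) (i - 1))
    (mono : ℕ → finSupport S → T)
    (hT : IsSkewPolyRing σ mono) :
    nuJacobson T ≠ {t : T | ∃ c : ℕ →₀ finSupport S,
        (∀ i : ℕ, c i ∈ nuJacobson (finSupport S)) ∧ t = c.sum fun i a => mono i a} ∧
      ∃ r : finSupport S, r ∉ nuJacobson (finSupport S) ∧ mono 1 r ∈ nuJacobson T := by
  obtain ⟨s, hs⟩ := (Set.ne_univ_iff_exists_notMem _).mp hS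
  -- the iterated shift
  have hσn : ∀ (n : ℕ) (f : finSupport S) (i : ℤ),
      ((σ^[n] f : finSupport S) : ℤ → S) i = (f : ℤ → S) (i - n) := by
    intro n
    induction n with
    | zero => intro f i; simp
    | succ n ih =>
      intro f i
      rw [Function.iterate_succ_apply', hσ, ih]
      push_cast
      ring_nf
  -- the embedding of S at coordinate 0
  have hδfin : ∀ a : S, (fun i : ℤ => if i = 0 then a else 0) ∈ finSupport S := by
    intro a
    apply Set.Finite.subset (Set.finite_singleton (0 : ℤ))
    intro i hi
    simp only [Function.mem_support, ne_eq] at hi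
    by_contra h
    simp only [Set.mem_singleton_iff] at h
    exact hi (if_neg h)
  let δ : S → finSupport S := fun a => ⟨fun i => if i = 0 then a else 0, hδfin a⟩
  have hδmul : ∀ a b : S, δ (a * b) = δ a * δ b := by
    intro a b
    apply Subtype.ext; funext i
    show (if i = 0 then a * b else 0) = (if i = 0 then a else 0) * (if i = 0 then b else 0)
    by_cases h : i = 0 <;> simp [h]
  have hδadd : ∀ a b : S, δ (a + b) = δ a + δ b := by
    intro a b
    apply Subtype.ext; funext i
    show (if i = 0 then a + b else 0) = (if i = 0 then a else 0) + (if i = 0 then b else 0)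
    by_cases h : i = 0 <;> simp [h]
  have hδzero : δ 0 = 0 := by
    apply Subtype.ext; funext i
    show (if i = 0 then (0 : S) else 0) = 0
    simp
  have hδneg : ∀ a : S, δ (-a) = -(δ a) := by
    intro a
    apply Subtype.ext; funext i
    show (if i = 0 then -a else 0) = -(if i = 0 then a else 0)
    by_cases h : i = 0 <;> simp [h]
  set r : finSupport S := δ s with hr_def
  -- Step 1 : r ∉ J(R)
  have hrJ : r ∉ nuJacobson (finSupport S) := by
    intro hr
    obtain ⟨I', hI', hrI'⟩ := hr
    obtain ⟨h0, hadd, hneg, hmul, hqr⟩ := hI'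
    apply hs
    refine ⟨{a : S | δ a ∈ I'}, ⟨?_, ?_, ?_, ?_, ?_⟩, hrI'⟩
    · show δ 0 ∈ I'; rw [hδzero]; exact h0
    · intro x hx y hy; show δ (x + y) ∈ I'; rw [hδadd]; exact hadd _ hx _ hy
    · intro x hx; show δ (-x) ∈ I'; rw [hδneg]; exact hneg _ hx
    · intro x hx a
      constructor
      · show δ (a * x) ∈ I'; rw [hδmul]; exact (hmul _ hx (δ a)).1
      · show δ (x * a) ∈ I'; rw [hδmul]; exact (hmul _ hx (δ a)).2
    · intro x hx
      obtain ⟨y, hy1, hy2⟩ := hqr _ hx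
      refine ⟨(y : ℤ → S) 0, ?_, ?_⟩
      · have := congrArg (fun f : finSupport S => (f : ℤ → S) 0) hy1
        simpa [δ] using this
      · have := congrArg (fun f : finSupport S => (f : ℤ → S) 0) hy2
        simpa [δ] using this
  -- Step 2 : the square-zero ideal I of T
  let Good : (ℕ →₀ finSupport S) → Prop := fun c =>
    ∀ (k : ℕ) (i : ℤ), ((c k : ℤ → S)) i ≠ 0 → 0 ≤ i ∧ i < (k : ℤ)
  let I : Set T := {t | ∃ c, Good c ∧ t = c.sum fun i a => mono i a}
  have hzeroI : (0 : T) ∈ I := ⟨0, fun k i hi => absurd rfl hi, by simp⟩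
  have haddI : ∀ x ∈ I, ∀ y ∈ I, x + y ∈ I := by
    rintro x ⟨c, hc, rfl⟩ y ⟨c', hc', rfl⟩
    refine ⟨c + c', ?_, ?_⟩
    · intro k i hi
      have : ((c k : ℤ → S)) i ≠ 0 ∨ ((c' k : ℤ → S)) i ≠ 0 := by
        by_contra h
        push_neg at h
        apply hi
        show (c k : ℤ → S) i + (c' k : ℤ → S) i = 0
        rw [h.1, h.2, add_zero]
      rcases this with h | h
      · exact hc k i h
      · exact hc' k i h
    · exact (Finsupp.sum_add_index' (fun i => hT.mono_zero i) hT.mono_add).symm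
  have hmonoI : ∀ (n : ℕ) (b : finSupport S),
      (∀ i : ℤ, (b : ℤ → S) i ≠ 0 → 0 ≤ i ∧ i < (n : ℤ)) → mono n b ∈ I := by
    intro n b hb
    refine ⟨Finsupp.single n b, ?_, (Finsupp.sum_single_index (hT.mono_zero n)).symm⟩
    intro k i hi
    rcases eq_or_ne n k with h | h
    · subst h
      rw [Finsupp.single_eq_same] at hi
      exact hb i hi
    · rw [Finsupp.single_eq_of_ne h.symm] at hi
      exact absurd rfl hi
  have hsumI : ∀ {α : Type} (f : Finset α) (g : α → T), (∀ a ∈ f, g a ∈ I) → (∑ a ∈ f, g a) ∈ I :=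
    fun f g h => Finset.sum_induction g (· ∈ I) (fun a b ha hb => haddI a ha b hb) hzeroI h
  have hnegI : ∀ x ∈ I, -x ∈ I := by
    rintro x ⟨c, hc, rfl⟩
    refine ⟨-c, ?_, ?_⟩
    · intro k i hi
      apply hc k i
      intro h
      apply hi
      show -((c k : ℤ → S) i) = 0
      rw [h, neg_zero]
    · have h : ((-c).sum fun i a => mono i a) = -(c.sum fun i a => mono i a) := by
        rw [show -c = 0 - c from (zero_sub c).symm,
          Finsupp.sum_sub_index (fun i a b => hT.mono_sub i a b)]
        simp
      exact h.symm
  have hmulI : ∀ x ∈ I, ∀ a : T, a * x ∈ I ∧ x * a ∈ I := by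
    rintro x ⟨c, hc, rfl⟩ a
    obtain ⟨d, rfl⟩ := hT.repr a
    constructor
    · rw [Finsupp.sum_mul, Finsupp.sum]
      apply hsumI
      intro j hj
      show mono j (d j) * (c.sum fun i a => mono i a) ∈ I
      rw [Finsupp.mul_sum, Finsupp.sum]
      apply hsumI
      intro k hk
      show mono j (d j) * mono k (c k) ∈ I
      rw [hT.mono_mul]
      apply hmonoI
      intro i hi
      have h2 : ((σ^[j] (c k) : finSupport S) : ℤ → S) i ≠ 0 := by
        intro h
        apply hi
        show (d j : ℤ → S) i * ((σ^[j] (c k) : finSupport S) : ℤ → S) i = 0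
        rw [h, mul_zero]
      rw [hσn] at h2
      have h3 := hc k _ h2
      constructor
      · omega
      · push_cast; omega
    · rw [Finsupp.mul_sum, Finsupp.sum]
      apply hsumI
      intro k hk
      show (c.sum fun i a => mono i a) * mono k (d k) ∈ I
      rw [Finsupp.sum_mul, Finsupp.sum]
      apply hsumI
      intro j hj
      show mono j (c j) * mono k (d k) ∈ I
      rw [hT.mono_mul]
      apply hmonoI
      intro i hi
      have h2 : (c j : ℤ → S) i ≠ 0 := by
        intro h
        apply hi
        show (c j : ℤ → S) i * ((σ^[j] (d k) : finSupport S) : ℤ → S) i = 0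
        rw [h, zero_mul]
      have h3 := hc j _ h2
      constructor
      · omega
      · push_cast; omega
  have hsqI : ∀ x ∈ I, ∀ y ∈ I, x * y = 0 := by
    rintro x ⟨c, hc, rfl⟩ y ⟨c', hc', rfl⟩
    rw [Finsupp.sum_mul, Finsupp.sum]
    apply Finset.sum_eq_zero
    intro j hj
    show mono j (c j) * (c'.sum fun i a => mono i a) = 0
    rw [Finsupp.mul_sum, Finsupp.sum]
    apply Finset.sum_eq_zero
    intro k hk
    show mono j (c j) * mono k (c' k) = 0
    rw [hT.mono_mul]
    have : c j * σ^[j] (c' k) = 0 := by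
      apply Subtype.ext; funext i
      show (c j : ℤ → S) i * ((σ^[j] (c' k) : finSupport S) : ℤ → S) i = 0
      by_cases h : (c j : ℤ → S) i = 0
      · rw [h, zero_mul]
      · have h1 := hc j i h
        rw [hσn]
        have h2 : (c' k : ℤ → S) (i - (j : ℤ)) = 0 := by
          by_contra h3
          have := hc' k _ h3
          omega
        rw [h2, mul_zero]
    rw [this, hT.mono_zero]
  have hqrI : ∀ x ∈ I, ∃ y : T, x + y + x * y = 0 ∧ x + y + y * x = 0 := by
    intro x hx
    refine ⟨-x, ?_, ?_⟩
    · rw [mul_neg, hsqI x hx x hx, neg_zero, add_neg_cancel, zero_add]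
    · rw [neg_mul, hsqI x hx x hx, neg_zero, add_neg_cancel, zero_add]
  have hIJ : I ∈ {I : Set T | 0 ∈ I ∧ (∀ x ∈ I, ∀ y ∈ I, x + y ∈ I) ∧ (∀ x ∈ I, -x ∈ I) ∧
      (∀ x ∈ I, ∀ a : T, a * x ∈ I ∧ x * a ∈ I) ∧
      ∀ x ∈ I, ∃ y : T, x + y + x * y = 0 ∧ x + y + y * x = 0} :=
    ⟨hzeroI, haddI, hnegI, hmulI, hqrI⟩
  have hrx : mono 1 r ∈ I := by
    apply hmonoI
    intro i hi
    have : i = 0 := by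
      by_contra h
      apply hi
      show (if i = 0 then s else 0) = 0
      exact if_neg h
    subst this
    norm_num
  have hrxJ : mono 1 r ∈ nuJacobson T := ⟨I, hIJ, hrx⟩
  refine ⟨?_, r, hrJ, hrxJ⟩
  intro heq
  rw [heq] at hrxJ
  obtain ⟨c, hcJ, hc⟩ := hrxJ
  have h1 : ((Finsupp.single 1 r).sum fun i a => mono i a) = mono 1 r :=
    Finsupp.sum_single_index (hT.mono_zero 1)
  have h2 : c = Finsupp.single 1 r := hT.sum_injective (hc.symm.trans h1.symm)
  have : r ∈ nuJacobson (finSupport S) := by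
    have := hcJ 1
    rwa [h2, Finsupp.single_eq_same] at this
  exact hrJ this
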